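/- For every u ∈ ℝ^m and every ε > 0 there exists δ > 0 such that for every s ∈ ℝ^m with 0 < ‖s‖ ≤ δ and every β_s ∈ B satisfying b(β_s)·(u+s) − f(β_s) = m̂(u+s), one has |m̂(u+s) − m̂(u) − b(β_s)·s| ≤ ε‖s‖. (That is, the concave minimum function m̂ is semismooth on ℝ^m with generalized gradients b(β_s) taken at minimizers for the perturbed point.) -/

import Mathlib

/-- Semismoothness of the concave minimum function
`m̂(u) = min_{β ∈ B} (b(β)·u - f(β))` on `ℝ^m`: for every `u` and `ε > 0` there is `δ > 0`
such that for every `s` with `0 < ‖s‖ ≤ δ` and every minimizer `βs` attaining `m̂(u+s)`,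
`|m̂(u+s) - m̂(u) - b(βs)·s| ≤ ε‖s‖`. -/
theorem stmt5 {m : ℕ} {B : Type*} [MetricSpace B] [CompactSpace B] [Nonempty B]
    (b : B → EuclideanSpace ℝ (Fin m)) (f : B → ℝ)
    (hb : Continuous b) (hf : Continuous f)
    (mhat : EuclideanSpace ℝ (Fin m) → ℝ)
    (hm : ∀ u, mhat u = ⨅ β : B, ((inner ℝ (b β) u : ℝ) - f β)) :
    ∀ (u : EuclideanSpace ℝ (Fin m)), ∀ ε > (0 : ℝ), ∃ δ > (0 : ℝ),
      ∀ s : EuclideanSpace ℝ (Fin m), 0 < ‖s‖ → ‖s‖ ≤ δ →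
        ∀ βs : B, (inner ℝ (b βs) (u + s) : ℝ) - f βs = mhat (u + s) →
          |mhat (u + s) - mhat u - (inner ℝ (b βs) s : ℝ)| ≤ ε * ‖s‖ := by
  have hg : ∀ v, Continuous fun β : B => (inner ℝ (b β) v : ℝ) - f β :=
    fun v => (hb.inner continuous_const).sub hf
  have hbdd : ∀ v, BddBelow (Set.range fun β : B => (inner ℝ (b β) v : ℝ) - f β) :=
    fun v => (isCompact_range (hg v)).bddBelow
  have hle : ∀ v (β : B), mhat v ≤ (inner ℝ (b β) v : ℝ) - f β := by
    intro v β; rw [hm]; exact ciInf_le (hbdd v) β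
  intro u ε hε
  by_contra hcon
  push_neg at hcon
  have h' : ∀ n : ℕ, ∃ s : EuclideanSpace ℝ (Fin m), 0 < ‖s‖ ∧ ‖s‖ ≤ 1/(n+1) ∧
      ∃ βs, (inner ℝ (b βs) (u+s) : ℝ) - f βs = mhat (u+s) ∧
        ε * ‖s‖ < |mhat (u + s) - mhat u - (inner ℝ (b βs) s : ℝ)| :=
    fun n => hcon (1/(n+1)) (by positivity)
  choose s hs0 hsle βs hmin hgt using h'
  have hs_tend : Filter.Tendsto s Filter.atTop (nhds 0) :=
    squeeze_zero_norm (fun n => hsle n) tendsto_one_div_add_atTop_nhds_zero_nat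
  obtain ⟨β', -, φ, hφmono, hβtend⟩ :=
    isCompact_univ.tendsto_subseq (x := fun n => βs n) (fun n => Set.mem_univ _)
  have hs' : Filter.Tendsto (fun n => s (φ n)) Filter.atTop (nhds 0) :=
    hs_tend.comp hφmono.tendsto_atTop
  have hb' : Filter.Tendsto (fun n => b (βs (φ n))) Filter.atTop (nhds (b β')) :=
    (hb.tendsto β').comp hβtend
  have hus : Filter.Tendsto (fun n => u + s (φ n)) Filter.atTop (nhds u) := by
    simpa using (tendsto_const_nhds (x := u)).add hs'
  have key : ∀ β : B, (inner ℝ (b β') u : ℝ) - f β' ≤ (inner ℝ (b β) u : ℝ) - f β := by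
    intro β
    have h1 : ∀ n, (inner ℝ (b (βs (φ n))) (u + s (φ n)) : ℝ) - f (βs (φ n)) ≤
        (inner ℝ (b β) (u + s (φ n)) : ℝ) - f β :=
      fun n => (le_of_eq (hmin (φ n))).trans (hle _ β)
    have hL : Filter.Tendsto
        (fun n => (inner ℝ (b (βs (φ n))) (u + s (φ n)) : ℝ) - f (βs (φ n)))
        Filter.atTop (nhds ((inner ℝ (b β') u : ℝ) - f β')) :=
      (hb'.inner hus).sub ((hf.tendsto β').comp hβtend)
    have hR : Filter.Tendsto (fun n => (inner ℝ (b β) (u + s (φ n)) : ℝ) - f β)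
        Filter.atTop (nhds ((inner ℝ (b β) u : ℝ) - f β)) :=
      (Filter.Tendsto.inner tendsto_const_nhds hus).sub tendsto_const_nhds
    exact le_of_tendsto_of_tendsto' hL hR h1
  have hmu : mhat u = (inner ℝ (b β') u : ℝ) - f β' :=
    le_antisymm (hle u β') (by rw [hm]; exact le_ciInf key)
  -- nonnegativity of D n
  have hD0 : ∀ n, 0 ≤ mhat (u + s n) - mhat u - (inner ℝ (b (βs n)) (s n) : ℝ) := by
    intro n
    have : mhat u ≤ (inner ℝ (b (βs n)) u : ℝ) - f (βs n) := hle u (βs n)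
    have heq : mhat (u + s n) - (inner ℝ (b (βs n)) (s n) : ℝ) =
        (inner ℝ (b (βs n)) u : ℝ) - f (βs n) := by
      rw [← hmin n, inner_add_right]; ring
    linarith [heq ▸ this]
  obtain ⟨N, hN⟩ := Metric.tendsto_atTop.mp hb' ε hε
  set k := φ N with hk
  have hdist : ‖b β' - b (βs k)‖ < ε := by
    have := hN N le_rfl
    rwa [dist_eq_norm, norm_sub_rev] at this
  have hub : mhat (u + s k) - mhat u - (inner ℝ (b (βs k)) (s k) : ℝ) ≤
      ‖b β' - b (βs k)‖ * ‖s k‖ := by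
    have h1 : mhat (u + s k) ≤ (inner ℝ (b β') (u + s k) : ℝ) - f β' := hle _ β'
    have h2 : (inner ℝ (b β' - b (βs k)) (s k) : ℝ) ≤ ‖b β' - b (βs k)‖ * ‖s k‖ :=
      real_inner_le_norm _ _
    rw [inner_sub_left] at h2
    rw [inner_add_right] at h1
    rw [hmu]
    linarith
  have habs : |mhat (u + s k) - mhat u - (inner ℝ (b (βs k)) (s k) : ℝ)| =
      mhat (u + s k) - mhat u - (inner ℝ (b (βs k)) (s k) : ℝ) := abs_of_nonneg (hD0 k)
  have := hgt k
  rw [habs] at this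
  have hlt : ε * ‖s k‖ < ε * ‖s k‖ := by
    calc ε * ‖s k‖ < mhat (u + s k) - mhat u - (inner ℝ (b (βs k)) (s k) : ℝ) := this
    _ ≤ ‖b β' - b (βs k)‖ * ‖s k‖ := hub
    _ < ε * ‖s k‖ := by exact mul_lt_mul_of_pos_right hdist (hs0 k)
  exact lt_irrefl _ hlt
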